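/- Let p ≥ 1, ℓ ≥ 0, b₀ ≥ 1, w₀ ≥ 0 be integers, s₀ = b₀ + w₀ and δ = p/(p+ℓ). Let B_n be the number of black balls after n steps in the Young–Pólya urn of period p and parameter ℓ with initial composition (b₀, w₀), and let B_n* = (p^δ/(p+ℓ))·B_n/n^δ. Then for every integer r ≥ 1, lim_{n→∞} E[(B_n*)^r] = m_r, where m_r = (Γ(b₀+r)Γ(s₀)/(Γ(b₀)Γ(s₀+r))) · ∏_{j=0}^{ℓ−1} Γ((s₀+r+p+j)/(p+ℓ))/Γ((s₀+p+j)/(p+ℓ)). -/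

import Mathlib

open Real Filter Topology

/-- `urnMass p ℓ b₀ w₀ n b` is the probability that the Young–Pólya urn of period `p`
and parameter `ℓ` with initial composition `(b₀, w₀)` contains `b` black balls after `n`
steps (the total number of balls after `n` steps is `b₀ + w₀ + n + ℓ⌊n/p⌋`). -/
noncomputable def urnMass (p ℓ b₀ w₀ : ℕ) : ℕ → ℕ → ℝ
  | 0, b => if b = b₀ then 1 else 0
  | n + 1, b =>
    urnMass p ℓ b₀ w₀ n (b - 1) *
        (((b - 1 : ℕ) : ℝ) / ((b₀ + w₀ + n + ℓ * (n / p) : ℕ) : ℝ)) +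
      urnMass p ℓ b₀ w₀ n b *
        ((((b₀ + w₀ + n + ℓ * (n / p) : ℕ) : ℝ) - (b : ℝ)) / ((b₀ + w₀ + n + ℓ * (n / p) : ℕ) : ℝ))

namespace YP


/-- ascending factorial of a real -/
noncomputable def af (x : ℝ) (r : ℕ) : ℝ := ∏ i ∈ Finset.range r, (x + i)

lemma af_zero (x : ℝ) : af x 0 = 1 := by simp [af]

lemma af_succ (x : ℝ) (r : ℕ) : af x (r + 1) = af x r * (x + r) := by
  simp [af, Finset.prod_range_succ]

lemma af_succ' (x : ℝ) (r : ℕ) : af x (r + 1) = x * af (x + 1) r := by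
  rw [af, af, Finset.prod_range_succ']
  have : ∀ i ∈ Finset.range r, (x + ((i : ℕ) + 1 : ℕ)) = (x + 1 + (i : ℝ)) := by
    intro i _; push_cast; ring
  rw [Finset.prod_congr rfl this]
  push_cast; ring

lemma af_nonneg {x : ℝ} (hx : 0 ≤ x) (r : ℕ) : 0 ≤ af x r :=
  Finset.prod_nonneg fun i _ => by positivity

lemma af_pos {x : ℝ} (hx : 0 < x) (r : ℕ) : 0 < af x r :=
  Finset.prod_pos fun i _ => by positivity

lemma key_af (x S : ℝ) (r : ℕ) :
    x * af (x + 1) r + (S - x) * af x r = (S + r) * af x r := by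
  have h1 : x * af (x + 1) r = af x r * (x + r) := (af_succ x r) ▸ (af_succ' x r).symm
  rw [h1]; ring

section urn
variable (p ℓ b₀ w₀ : ℕ)

/-- total number of balls after n steps -/
def S (n : ℕ) : ℕ := b₀ + w₀ + n + ℓ * (n / p)

lemma urnMass_zero_of_lt {b : ℕ} (hb : b < b₀) (n : ℕ) : urnMass p ℓ b₀ w₀ n b = 0 := by
  induction n generalizing b with
  | zero => simp [urnMass]; omega
  | succ n ih =>
    rw [urnMass]
    rcases Nat.eq_zero_or_pos b with hb0 | hb0
    · subst hb0
      rw [ih (by omega)]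
      simp
    · rw [ih (by omega), ih (by omega)]
      simp

lemma urnMass_zero_of_gt {b : ℕ} (n : ℕ) (hb : b₀ + n < b) : urnMass p ℓ b₀ w₀ n b = 0 := by
  induction n generalizing b with
  | zero => simp [urnMass]; omega
  | succ n ih =>
    rw [urnMass, ih (b := b) (by omega), ih (b := b - 1) (by omega)]
    simp

lemma urnMass_nonneg (hb : 1 ≤ b₀) (n b : ℕ) : 0 ≤ urnMass p ℓ b₀ w₀ n b := by
  induction n generalizing b with
  | zero => rw [urnMass]; split <;> norm_num
  | succ n ih =>
    rw [urnMass]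
    set Sr := ((b₀ + w₀ + n + ℓ * (n / p) : ℕ) : ℝ) with hSr
    have hS0 : (0:ℝ) ≤ Sr := Nat.cast_nonneg _
    have t1 : 0 ≤ urnMass p ℓ b₀ w₀ n (b-1) * (((b-1:ℕ):ℝ)/Sr) :=
      mul_nonneg (ih _) (div_nonneg (Nat.cast_nonneg _) hS0)
    rcases le_or_gt b (b₀+n) with hble | hbgt
    · have hbS : (b:ℝ) ≤ Sr := by
        rw [hSr]; exact_mod_cast le_trans (by omega : b ≤ b₀+w₀+n) (Nat.le_add_right _ _)
      exact add_nonneg t1 (mul_nonneg (ih _) (div_nonneg (by linarith) hS0))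
    · rw [urnMass_zero_of_gt p ℓ b₀ w₀ n hbgt]
      simpa using t1


lemma S_pos {p ℓ b₀ w₀ : ℕ} (hb : 1 ≤ b₀) (n : ℕ) : 0 < S p ℓ b₀ w₀ n := by
  unfold S; omega

noncomputable def M (r n : ℕ) : ℝ :=
  ∑ b ∈ Finset.range (b₀ + n + 1), urnMass p ℓ b₀ w₀ n b * af b r

lemma M_zero (r : ℕ) : M p ℓ b₀ w₀ r 0 = af b₀ r := by
  unfold M
  rw [Finset.sum_eq_single b₀]
  · simp [urnMass]
  · intro b _ hne; simp [urnMass, hne]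
  · intro h; exact absurd (Finset.self_mem_range_succ b₀) (by simpa using h)

lemma M_succ (hb : 1 ≤ b₀) (r n : ℕ) :
    M p ℓ b₀ w₀ r (n + 1) =
      M p ℓ b₀ w₀ r n * (((S p ℓ b₀ w₀ n : ℝ) + r) / (S p ℓ b₀ w₀ n)) := by
  have hS : (0:ℝ) < (S p ℓ b₀ w₀ n : ℝ) := by exact_mod_cast S_pos hb n
  set Sr : ℝ := (S p ℓ b₀ w₀ n : ℝ) with hSr
  have hSne : Sr ≠ 0 := ne_of_gt hS
  have hexp : ∀ b, urnMass p ℓ b₀ w₀ (n+1) b =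
      urnMass p ℓ b₀ w₀ n (b-1) * (((b-1:ℕ):ℝ)/Sr) +
        urnMass p ℓ b₀ w₀ n b * ((Sr - b)/Sr) := fun b => rfl
  unfold M
  calc ∑ b ∈ Finset.range (b₀ + (n+1) + 1), urnMass p ℓ b₀ w₀ (n+1) b * af b r
      = ∑ b ∈ Finset.range (b₀ + n + 1 + 1),
          (urnMass p ℓ b₀ w₀ n (b-1) * (((b-1:ℕ):ℝ)/Sr) * af b r
           + urnMass p ℓ b₀ w₀ n b * ((Sr - b)/Sr) * af b r) := by
        apply Finset.sum_congr rfl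
        intro b _; rw [hexp b]; ring
    _ = (∑ b ∈ Finset.range (b₀+n+1), urnMass p ℓ b₀ w₀ n b * ((b:ℝ)/Sr) * af ((b:ℝ)+1) r)
        + ∑ b ∈ Finset.range (b₀+n+1), urnMass p ℓ b₀ w₀ n b * ((Sr - b)/Sr) * af b r := by
        rw [Finset.sum_add_distrib]
        congr 1
        · rw [Finset.sum_range_succ']
          simp only [Nat.add_sub_cancel, Nat.zero_sub, Nat.cast_zero, zero_div, mul_zero,
            zero_mul, add_zero]
          apply Finset.sum_congr rfl
          intro b _
          have : (((b+1:ℕ)):ℝ) = (b:ℝ)+1 := by push_cast; ring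
          rw [this]
        · rw [Finset.sum_range_succ]
          rw [urnMass_zero_of_gt p ℓ b₀ w₀ n (by omega)]
          simp
    _ = ∑ b ∈ Finset.range (b₀+n+1), urnMass p ℓ b₀ w₀ n b * af b r * ((Sr + r)/Sr) := by
        rw [← Finset.sum_add_distrib]
        apply Finset.sum_congr rfl
        intro b _
        have hk := key_af (b:ℝ) Sr r
        field_simp
        linear_combination urnMass p ℓ b₀ w₀ n b * hk
    _ = M p ℓ b₀ w₀ r n * ((Sr + r)/Sr) := by
        rw [M, ← Finset.sum_mul]

lemma M_eq (hb : 1 ≤ b₀) (r n : ℕ) :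
    M p ℓ b₀ w₀ r n = af b₀ r * ∏ k ∈ Finset.range n, (((S p ℓ b₀ w₀ k : ℝ) + r) / (S p ℓ b₀ w₀ k)) := by
  induction n with
  | zero => simp [M_zero]
  | succ n ih => rw [M_succ p ℓ b₀ w₀ hb, ih, Finset.prod_range_succ]; ring


end urn

/-- Euler-product ratio asymptotics:
`∏_{j<m} (a+r+cj)/(a+cj) ~ m^(r/c) Γ(a/c)/Γ((a+r)/c)`. -/
lemma ratio_prod_tendsto (a c : ℝ) (ha : 0 < a) (hc : 0 < c) (r : ℕ) :
    Tendsto (fun m : ℕ =>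
        (∏ j ∈ Finset.range m, ((a + r + c * j) / (a + c * j))) / (m : ℝ) ^ ((r : ℝ) / c))
      atTop (𝓝 (Real.Gamma (a / c) / Real.Gamma ((a + r) / c))) := by
  set α : ℝ := (a + r) / c with hα
  set β : ℝ := a / c with hβ
  have hαpos : 0 < α := by positivity
  have hβpos : 0 < β := by positivity
  have hlim : Tendsto (fun m : ℕ =>
      (Real.GammaSeq β m / Real.GammaSeq α m) * ((β + m) / (α + m)))
      atTop (𝓝 (Real.Gamma β / Real.Gamma α * 1)) := by
    apply Tendsto.mul
    · exact (Real.GammaSeq_tendsto_Gamma β).div (Real.GammaSeq_tendsto_Gamma α)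
        (ne_of_gt (Real.Gamma_pos_of_pos hαpos))
    · have h1 : Tendsto (fun m : ℕ => (β / m + 1) / (α / m + 1)) atTop (𝓝 ((0 + 1)/(0 + 1))) := by
        apply Tendsto.div
        · exact (tendsto_const_div_atTop_nhds_zero_nat β).add tendsto_const_nhds
        · exact (tendsto_const_div_atTop_nhds_zero_nat α).add tendsto_const_nhds
        · norm_num
      rw [show ((0:ℝ) + 1)/(0 + 1) = 1 by norm_num] at h1
      apply h1.congr'
      filter_upwards [eventually_ge_atTop 1] with m hm
      have hm0 : (0:ℝ) < (m:ℝ) := by exact_mod_cast hm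
      field_simp
  rw [mul_one] at hlim
  apply hlim.congr'
  filter_upwards [eventually_ge_atTop 1] with m hm
  have hm0 : (0:ℝ) < (m:ℝ) := by exact_mod_cast hm
  -- rewrite the products
  have hfac : ∀ j ∈ Finset.range m, (a + r + c * j) / (a + c * j) = (α + j) / (β + j) := by
    intro j _
    have h1 : a + c * (j:ℝ) ≠ 0 := by positivity
    have h2 : a / c + (j:ℝ) ≠ 0 := by positivity
    rw [hα, hβ]
    field_simp
  rw [Finset.prod_congr rfl hfac, Finset.prod_div_distrib]
  set Pα : ℝ := ∏ j ∈ Finset.range m, (α + j) with hPα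
  set Pβ : ℝ := ∏ j ∈ Finset.range m, (β + j) with hPβ
  have hPαpos : 0 < Pα := Finset.prod_pos fun j _ => by positivity
  have hPβpos : 0 < Pβ := Finset.prod_pos fun j _ => by positivity
  have hGα : Real.GammaSeq α m = (m : ℝ) ^ α * (m.factorial : ℝ) / (Pα * (α + m)) := by
    rw [Real.GammaSeq, Finset.prod_range_succ, ← hPα]
  have hGβ : Real.GammaSeq β m = (m : ℝ) ^ β * (m.factorial : ℝ) / (Pβ * (β + m)) := by
    rw [Real.GammaSeq, Finset.prod_range_succ, ← hPβ]
  rw [hGα, hGβ]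
  have hmα : (0:ℝ) < (m:ℝ) ^ α := rpow_pos_of_pos hm0 α
  have hmβ : (0:ℝ) < (m:ℝ) ^ β := rpow_pos_of_pos hm0 β
  have hmr : (0:ℝ) < (m:ℝ) ^ ((r:ℝ)/c) := rpow_pos_of_pos hm0 _
  have hfact : (0:ℝ) < (m.factorial : ℝ) := by exact_mod_cast Nat.factorial_pos m
  have hrel : (m:ℝ) ^ α = (m:ℝ) ^ β * (m:ℝ) ^ ((r:ℝ)/c) := by
    rw [← Real.rpow_add hm0]
    congr 1
    rw [hα, hβ]
    field_simp
  rw [hrel]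
  have h1 : α + m ≠ 0 := by positivity
  have h2 : β + m ≠ 0 := by positivity
  field_simp

section urn
variable (p ℓ b₀ w₀ : ℕ)

/-- The exact product appearing in the factorial-moment formula. -/
noncomputable def Q (r n : ℕ) : ℝ :=
  ∏ k ∈ Finset.range n, (((S p ℓ b₀ w₀ k : ℝ) + r) / (S p ℓ b₀ w₀ k))

lemma Q_pos (hb : 1 ≤ b₀) (r n : ℕ) : 0 < Q p ℓ b₀ w₀ r n := by
  apply Finset.prod_pos
  intro k _
  have h : (0:ℝ) < (S p ℓ b₀ w₀ k : ℝ) := by exact_mod_cast S_pos hb k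
  positivity

lemma Q_block (hp : 1 ≤ p) (r m : ℕ) :
    Q p ℓ b₀ w₀ r (p * m) =
      ∏ i ∈ Finset.range p, ∏ j ∈ Finset.range m,
        ((((b₀ + w₀ : ℕ) : ℝ) + i + r + ((p + ℓ : ℕ) : ℝ) * j) /
          (((b₀ + w₀ : ℕ) : ℝ) + i + ((p + ℓ : ℕ) : ℝ) * j)) := by
  induction m with
  | zero => simp [Q]
  | succ m ih =>
    have hmul : p * (m + 1) = p * m + p := by ring
    rw [Q, hmul, Finset.prod_range_add, ← Q, ih]
    have hstep : ∀ i ∈ Finset.range p,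
        (((S p ℓ b₀ w₀ (p * m + i) : ℝ) + r) / (S p ℓ b₀ w₀ (p * m + i))) =
        ((((b₀ + w₀ : ℕ) : ℝ) + i + r + ((p + ℓ : ℕ) : ℝ) * m) /
          (((b₀ + w₀ : ℕ) : ℝ) + i + ((p + ℓ : ℕ) : ℝ) * m)) := by
      intro i hi
      have hdiv : (p * m + i) / p = m := by
        rw [Nat.mul_add_div (by omega)]
        simp [Nat.div_eq_of_lt (Finset.mem_range.1 hi)]
      have hS : S p ℓ b₀ w₀ (p * m + i) = b₀ + w₀ + (p * m + i) + ℓ * m := by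
        rw [S, hdiv]
      rw [hS]
      push_cast
      ring_nf
    rw [Finset.prod_congr rfl hstep]
    simp only [Finset.prod_range_succ, Finset.prod_mul_distrib]

lemma Q_block_tendsto (hp : 1 ≤ p) (hb : 1 ≤ b₀) (r : ℕ) :
    Tendsto (fun m : ℕ => Q p ℓ b₀ w₀ r (p * m) /
        (m : ℝ) ^ ((p : ℝ) / ((p + ℓ : ℕ) : ℝ) * r)) atTop
      (𝓝 (∏ i ∈ Finset.range p,
        (Real.Gamma ((((b₀ + w₀ : ℕ) : ℝ) + i) / ((p + ℓ : ℕ) : ℝ)) /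
          Real.Gamma (((((b₀ + w₀ : ℕ) : ℝ) + i) + r) / ((p + ℓ : ℕ) : ℝ))))) := by
  have hq : (0:ℝ) < ((p + ℓ : ℕ) : ℝ) := by exact_mod_cast (by omega : 0 < p + ℓ)
  have hper : ∀ i ∈ Finset.range p, Tendsto (fun m : ℕ =>
      (∏ j ∈ Finset.range m, ((((b₀ + w₀ : ℕ) : ℝ) + i + r + ((p + ℓ : ℕ) : ℝ) * j) /
          (((b₀ + w₀ : ℕ) : ℝ) + i + ((p + ℓ : ℕ) : ℝ) * j))) / (m : ℝ) ^ ((r : ℝ) / ((p + ℓ : ℕ) : ℝ)))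
      atTop (𝓝 ((Real.Gamma ((((b₀ + w₀ : ℕ) : ℝ) + i) / ((p + ℓ : ℕ) : ℝ)) /
          Real.Gamma (((((b₀ + w₀ : ℕ) : ℝ) + i) + r) / ((p + ℓ : ℕ) : ℝ))))) := by
    intro i _
    have ha : (0:ℝ) < ((b₀ + w₀ : ℕ) : ℝ) + i := by
      have : (1:ℝ) ≤ ((b₀ + w₀ : ℕ) : ℝ) := by exact_mod_cast (by omega : 1 ≤ b₀ + w₀)
      have : (0:ℝ) ≤ (i:ℝ) := Nat.cast_nonneg i
      linarith
    exact ratio_prod_tendsto _ _ ha hq r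
  have := tendsto_finset_prod (Finset.range p) hper
  apply this.congr
  intro m
  rw [Finset.prod_div_distrib, Finset.prod_const, Q_block p ℓ b₀ w₀ hp r m]
  congr 1
  rw [Finset.card_range]
  rw [← Real.rpow_natCast ((m:ℝ) ^ ((r : ℝ) / ((p + ℓ : ℕ) : ℝ))) p,
    ← Real.rpow_mul (Nat.cast_nonneg m)]
  congr 1
  field_simp

lemma tendsto_div_p_atTop (hp : 1 ≤ p) : Tendsto (fun n : ℕ => n / p) atTop atTop := by
  apply tendsto_atTop_atTop.2
  intro b
  exact ⟨b * p, fun n hn => (Nat.le_div_iff_mul_le (by omega)).2 hn⟩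

lemma tail_tendsto (hp : 1 ≤ p) (hb : 1 ≤ b₀) (r : ℕ) :
    Tendsto (fun n : ℕ => ∏ k ∈ Finset.Ico (p * (n / p)) n,
      (((S p ℓ b₀ w₀ k : ℝ) + r) / (S p ℓ b₀ w₀ k))) atTop (𝓝 1) := by
  have hratio_ge : ∀ k, (1:ℝ) ≤ ((S p ℓ b₀ w₀ k : ℝ) + r) / (S p ℓ b₀ w₀ k) := by
    intro k
    have h : (0:ℝ) < (S p ℓ b₀ w₀ k : ℝ) := by exact_mod_cast S_pos hb k
    rw [le_div_iff₀ h]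
    have : (0:ℝ) ≤ (r:ℝ) := Nat.cast_nonneg r
    linarith
  set u : ℕ → ℝ := fun n => (1 + (r:ℝ) / ((b₀ + w₀ + p * (n / p) : ℕ) : ℝ)) ^ p with hu
  have hub : ∀ n, (∏ k ∈ Finset.Ico (p * (n / p)) n,
      (((S p ℓ b₀ w₀ k : ℝ) + r) / (S p ℓ b₀ w₀ k))) ≤ u n := by
    intro n
    have hx : (0:ℝ) < ((b₀ + w₀ + p * (n / p) : ℕ) : ℝ) := by
      exact_mod_cast (by omega : 0 < b₀ + w₀ + p * (n/p))
    have hfle : ∀ k ∈ Finset.Ico (p * (n / p)) n,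
        (((S p ℓ b₀ w₀ k : ℝ) + r) / (S p ℓ b₀ w₀ k)) ≤
          1 + (r:ℝ) / ((b₀ + w₀ + p * (n / p) : ℕ) : ℝ) := by
      intro k hk
      have hk1 := (Finset.mem_Ico.1 hk).1
      have hSk : (0:ℝ) < (S p ℓ b₀ w₀ k : ℝ) := by exact_mod_cast S_pos hb k
      have hSge : ((b₀ + w₀ + p * (n / p) : ℕ) : ℝ) ≤ (S p ℓ b₀ w₀ k : ℝ) := by
        have : b₀ + w₀ + p * (n/p) ≤ S p ℓ b₀ w₀ k := by rw [S]; omega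
        exact_mod_cast this
      have h1 : ((S p ℓ b₀ w₀ k : ℝ) + r) / (S p ℓ b₀ w₀ k) = 1 + (r:ℝ) / (S p ℓ b₀ w₀ k) := by
        field_simp
      rw [h1]
      have h2 : (r:ℝ) / (S p ℓ b₀ w₀ k : ℝ) ≤ (r:ℝ) / ((b₀ + w₀ + p * (n / p) : ℕ) : ℝ) := by
        gcongr
      linarith
    have hcard : (Finset.Ico (p * (n / p)) n).card ≤ p := by
      rw [Nat.card_Ico]
      have h1 := Nat.div_add_mod n p
      have h2 : n % p < p := Nat.mod_lt n (by omega)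
      omega
    calc (∏ k ∈ Finset.Ico (p * (n / p)) n, (((S p ℓ b₀ w₀ k : ℝ) + r) / (S p ℓ b₀ w₀ k)))
        ≤ ∏ _k ∈ Finset.Ico (p * (n / p)) n, (1 + (r:ℝ) / ((b₀ + w₀ + p * (n / p) : ℕ) : ℝ)) :=
          Finset.prod_le_prod (fun k _ => le_trans zero_le_one (hratio_ge k)) hfle
      _ = (1 + (r:ℝ) / ((b₀ + w₀ + p * (n / p) : ℕ) : ℝ)) ^ (Finset.Ico (p * (n / p)) n).card :=
          Finset.prod_const _
      _ ≤ u n := by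
          apply pow_le_pow_right₀ _ hcard
          have : (0:ℝ) ≤ (r:ℝ) / ((b₀ + w₀ + p * (n / p) : ℕ) : ℝ) := by positivity
          linarith
  have hxat : Tendsto (fun n : ℕ => ((b₀ + w₀ + p * (n / p) : ℕ) : ℝ)) atTop atTop := by
    apply tendsto_natCast_atTop_atTop.comp
    apply tendsto_atTop_atTop.2
    intro b
    refine ⟨b * p, fun n hn => ?_⟩
    have h1 : b ≤ n / p := (Nat.le_div_iff_mul_le (by omega)).2 hn
    have h2 : n / p ≤ p * (n / p) := Nat.le_mul_of_pos_left _ (by omega)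
    omega
  have hu1 : Tendsto u atTop (𝓝 1) := by
    have h0 : Tendsto (fun n : ℕ => (r:ℝ) / ((b₀ + w₀ + p * (n / p) : ℕ) : ℝ)) atTop (𝓝 0) :=
      Tendsto.const_div_atTop hxat r
    have h1 : Tendsto u atTop (𝓝 ((1 + 0) ^ p)) := (tendsto_const_nhds.add h0).pow p
    simpa using h1
  have hlb : ∀ n, (1:ℝ) ≤ ∏ k ∈ Finset.Ico (p * (n / p)) n,
      (((S p ℓ b₀ w₀ k : ℝ) + r) / (S p ℓ b₀ w₀ k)) := by
    intro n
    have := Finset.prod_le_prod (s := Finset.Ico (p * (n / p)) n)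
      (f := fun _ => (1:ℝ)) (g := fun k => ((S p ℓ b₀ w₀ k : ℝ) + r) / (S p ℓ b₀ w₀ k))
      (fun k _ => zero_le_one) (fun k _ => hratio_ge k)
    simpa using this
  exact tendsto_of_tendsto_of_tendsto_of_le_of_le tendsto_const_nhds hu1 hlb hub

lemma nat_div_ratio_tendsto (hp : 1 ≤ p) :
    Tendsto (fun n : ℕ => ((n / p : ℕ) : ℝ) / (n : ℝ)) atTop (𝓝 ((1:ℝ)/p)) := by
  have hp0 : (0:ℝ) < (p:ℝ) := by exact_mod_cast hp
  have hlow : Tendsto (fun n : ℕ => (1:ℝ)/p - 1/(n:ℝ)) atTop (𝓝 ((1:ℝ)/p - 0)) :=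
    tendsto_const_nhds.sub tendsto_one_div_atTop_nhds_zero_nat
  rw [sub_zero] at hlow
  apply tendsto_of_tendsto_of_tendsto_of_le_of_le' hlow tendsto_const_nhds
  · filter_upwards [eventually_ge_atTop 1] with n hn
    have hn0 : (0:ℝ) < (n:ℝ) := by exact_mod_cast hn
    have h3 : (n:ℝ) < (p:ℝ) * ((n/p : ℕ):ℝ) + p := by
      have h1 := Nat.div_add_mod n p
      have h2 : n % p < p := Nat.mod_lt n (by omega)
      have : n < p * (n/p) + p := by omega
      exact_mod_cast this
    have key : (n:ℝ)/p - 1 ≤ ((n / p : ℕ) : ℝ) := by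
      rw [sub_le_iff_le_add, div_le_iff₀ hp0]
      linarith
    have h4 : ((n:ℝ)/p - 1)/(n:ℝ) ≤ ((n/p:ℕ):ℝ)/(n:ℝ) := by gcongr
    calc (1:ℝ)/p - 1/(n:ℝ) = ((n:ℝ)/p - 1)/(n:ℝ) := by field_simp
      _ ≤ ((n/p:ℕ):ℝ)/(n:ℝ) := h4
  · filter_upwards [eventually_ge_atTop 1] with n hn
    have hn0 : (0:ℝ) < (n:ℝ) := by exact_mod_cast hn
    have hm : ((n/p:ℕ):ℝ) * p ≤ (n:ℝ) := by exact_mod_cast Nat.div_mul_le_self n p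
    rw [div_le_div_iff₀ hn0 hp0]
    linarith

lemma Q_tendsto (hp : 1 ≤ p) (hb : 1 ≤ b₀) (r : ℕ) :
    Tendsto (fun n : ℕ => Q p ℓ b₀ w₀ r n / (n : ℝ) ^ ((p : ℝ) / ((p + ℓ : ℕ) : ℝ) * r)) atTop
      (𝓝 ((∏ i ∈ Finset.range p,
        (Real.Gamma ((((b₀ + w₀ : ℕ) : ℝ) + i) / ((p + ℓ : ℕ) : ℝ)) /
          Real.Gamma (((((b₀ + w₀ : ℕ) : ℝ) + i) + r) / ((p + ℓ : ℕ) : ℝ)))) *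
        ((1:ℝ)/p) ^ ((p : ℝ) / ((p + ℓ : ℕ) : ℝ) * r))) := by
  set e := (p : ℝ) / ((p + ℓ : ℕ) : ℝ) * r with he
  have h1 : Tendsto (fun n : ℕ => Q p ℓ b₀ w₀ r (p * (n / p)) / ((n / p : ℕ) : ℝ) ^ e) atTop
      (𝓝 (∏ i ∈ Finset.range p,
        (Real.Gamma ((((b₀ + w₀ : ℕ) : ℝ) + i) / ((p + ℓ : ℕ) : ℝ)) /
          Real.Gamma (((((b₀ + w₀ : ℕ) : ℝ) + i) + r) / ((p + ℓ : ℕ) : ℝ))))) :=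
    (Q_block_tendsto p ℓ b₀ w₀ hp hb r).comp (tendsto_div_p_atTop p hp)
  have h2 := tail_tendsto p ℓ b₀ w₀ hp hb r
  have h3 : Tendsto (fun n : ℕ => (((n / p : ℕ) : ℝ) / (n : ℝ)) ^ e) atTop
      (𝓝 (((1:ℝ)/p) ^ e)) := by
    apply (nat_div_ratio_tendsto p hp).rpow_const
    left
    positivity
  have hcomb := (h1.mul h2).mul h3
  rw [mul_one] at hcomb
  apply hcomb.congr'
  filter_upwards [eventually_ge_atTop p] with n hn
  have hm1 : 1 ≤ n / p := (Nat.le_div_iff_mul_le (by omega)).2 (by omega)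
  have hmpos : (0:ℝ) < ((n/p : ℕ):ℝ) := by exact_mod_cast hm1
  have hnpos : (0:ℝ) < (n:ℝ) := by exact_mod_cast (by omega : 1 ≤ n)
  have hme : (0:ℝ) < ((n/p : ℕ):ℝ) ^ e := rpow_pos_of_pos hmpos e
  have hne : (0:ℝ) < (n:ℝ) ^ e := rpow_pos_of_pos hnpos e
  have hQsplit : Q p ℓ b₀ w₀ r n = Q p ℓ b₀ w₀ r (p * (n/p)) *
      ∏ k ∈ Finset.Ico (p * (n / p)) n, (((S p ℓ b₀ w₀ k : ℝ) + r) / (S p ℓ b₀ w₀ k)) := by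
    rw [Q, Q, Finset.prod_range_mul_prod_Ico _ (Nat.mul_div_le n p)]
  have hdiv_rpow : (((n / p : ℕ) : ℝ) / (n : ℝ)) ^ e = ((n/p : ℕ):ℝ) ^ e / (n:ℝ) ^ e :=
    Real.div_rpow hmpos.le hnpos.le e
  rw [hQsplit, hdiv_rpow]
  set Q1 := Q p ℓ b₀ w₀ r (p * (n/p))
  set t := ∏ k ∈ Finset.Ico (p * (n / p)) n, (((S p ℓ b₀ w₀ k : ℝ) + r) / (S p ℓ b₀ w₀ k))
  calc (Q1 / ((n/p : ℕ):ℝ) ^ e * t) * (((n/p : ℕ):ℝ) ^ e / (n:ℝ) ^ e)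
      = (Q1 * t) * (((n/p : ℕ):ℝ) ^ e / ((n/p : ℕ):ℝ) ^ e) / (n:ℝ) ^ e := by ring
    _ = (Q1 * t) / (n:ℝ) ^ e := by rw [div_self hme.ne', mul_one]

lemma Gamma_af (x : ℝ) (hx : 0 < x) (r : ℕ) :
    Real.Gamma (x + r) = af x r * Real.Gamma x := by
  induction r with
  | zero => simp [af_zero]
  | succ r ih =>
    have h1 : x + ((r:ℕ)+1 : ℕ) = (x + r) + 1 := by push_cast; ring
    rw [h1, Real.Gamma_add_one (by positivity), ih, af_succ]
    ring

lemma gamma_prod_eq (x : ℝ) (hx : 0 < x) (q r : ℕ) (hq : 1 ≤ q) :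
    ∏ i ∈ Finset.range q,
        (Real.Gamma ((x + r + i) / (q:ℝ)) / Real.Gamma ((x + i) / (q:ℝ))) =
      af x r / (q:ℝ) ^ r := by
  have hq0 : (0:ℝ) < (q:ℝ) := by exact_mod_cast hq
  set f : ℕ → ℝ := fun k => Real.Gamma ((x + k) / (q:ℝ)) with hf
  have hfpos : ∀ k, 0 < f k := fun k => Real.Gamma_pos_of_pos (by positivity)
  have hA : ∀ i ∈ Finset.range q, Real.Gamma ((x + r + i) / (q:ℝ)) = f (r + i) := by
    intro i _
    rw [hf]
    congr 2
    push_cast; ring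
  have hD : ∀ i ∈ Finset.range r, f (q + i) = ((x + i) / (q:ℝ)) * f i := by
    intro i _
    have h1 : (x + ((q + i : ℕ) : ℝ)) / (q:ℝ) = (x + i) / (q:ℝ) + 1 := by
      push_cast
      field_simp
      ring
    rw [hf]
    simp only []
    rw [h1, Real.Gamma_add_one (by positivity)]
  have hB : (∏ k ∈ Finset.range r, f k) * (∏ i ∈ Finset.range q, f (r + i)) =
      ∏ k ∈ Finset.range (r + q), f k := (Finset.prod_range_add f r q).symm
  have hC : (∏ k ∈ Finset.range q, f k) * (∏ i ∈ Finset.range r, f (q + i)) =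
      ∏ k ∈ Finset.range (q + r), f k := (Finset.prod_range_add f q r).symm
  have hPr : (0:ℝ) < ∏ k ∈ Finset.range r, f k := Finset.prod_pos fun k _ => hfpos k
  have hPq : (0:ℝ) < ∏ k ∈ Finset.range q, f k := Finset.prod_pos fun k _ => hfpos k
  have hDprod : (∏ i ∈ Finset.range r, f (q + i)) =
      (af x r / (q:ℝ) ^ r) * ∏ k ∈ Finset.range r, f k := by
    rw [Finset.prod_congr rfl hD, Finset.prod_mul_distrib, Finset.prod_div_distrib,
      Finset.prod_const, Finset.card_range, af]
  have hkey : (∏ i ∈ Finset.range q, f (r + i)) * (∏ k ∈ Finset.range r, f k) =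
      ((af x r / (q:ℝ) ^ r) * (∏ k ∈ Finset.range q, f k)) * ∏ k ∈ Finset.range r, f k := by
    rw [mul_comm (∏ i ∈ Finset.range q, f (r + i)) _, hB, add_comm r q, ← hC, hDprod]
    ring
  have hmain : (∏ i ∈ Finset.range q, f (r + i)) =
      (af x r / (q:ℝ) ^ r) * ∏ k ∈ Finset.range q, f k :=
    mul_right_cancel₀ hPr.ne' hkey
  rw [Finset.prod_div_distrib, Finset.prod_congr rfl hA, hmain]
  field_simp
  ring

lemma pow_le_af (r : ℕ) (b : ℝ) (hb : 0 ≤ b) : b ^ r ≤ af b r := by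
  induction r with
  | zero => simp [af_zero]
  | succ r ih =>
    rw [pow_succ, af_succ]
    have h1 : (0:ℝ) ≤ b ^ r := by positivity
    have h2 : b ≤ b + r := by
      have : (0:ℝ) ≤ (r:ℝ) := Nat.cast_nonneg r
      linarith
    have h3 : (0:ℝ) ≤ af b r := le_trans h1 ih
    nlinarith

lemma af_le_pow_add (r : ℕ) : ∃ C : ℝ, 0 ≤ C ∧ ∀ b : ℝ, 1 ≤ b →
    af b (r + 1) ≤ b ^ (r + 1) + C * af b r := by
  induction r with
  | zero =>
    refine ⟨0, le_refl 0, fun b hb => ?_⟩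
    rw [af_succ, af_zero]
    norm_num
  | succ r ih =>
    obtain ⟨C, hC0, hC⟩ := ih
    refine ⟨(r + 1) * (1 + C) + C, by positivity, fun b hb => ?_⟩
    have hb0 : (0:ℝ) < b := lt_of_lt_of_le zero_lt_one hb
    have h1 : af b (r + 2) = af b (r + 1) * (b + (r + 1)) := by
      rw [af_succ]; push_cast; ring
    have h2 := hC b hb
    have h3 : b ^ (r + 1) ≤ af b (r + 1) := pow_le_af (r + 1) b hb0.le
    have h4 : af b r ≤ af b (r + 1) := by
      rw [af_succ]
      have hpos : 0 < af b r := af_pos hb0 r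
      have : (1:ℝ) ≤ b + r := by
        have : (0:ℝ) ≤ (r:ℝ) := Nat.cast_nonneg r
        linarith
      nlinarith
    have h5 : af b r * (b + r) = af b (r + 1) := (af_succ b r).symm
    have hafr : 0 < af b r := af_pos hb0 r
    have hafr1 : 0 < af b (r + 1) := af_pos hb0 (r + 1)
    have hcast : ((r + 1 : ℕ) : ℝ) = (r : ℝ) + 1 := by push_cast; ring
    calc af b (r + 2) = af b (r + 1) * (b + (r + 1)) := h1
      _ ≤ (b ^ (r + 1) + C * af b r) * (b + (r + 1)) := by
          apply mul_le_mul_of_nonneg_right h2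
          have : (0:ℝ) ≤ (r:ℝ) := Nat.cast_nonneg r
          linarith
      _ = b ^ (r + 2) + (r + 1) * b ^ (r + 1) + C * (af b r * (b + r)) + C * af b r := by
          ring
      _ = b ^ (r + 2) + (r + 1) * b ^ (r + 1) + C * af b (r + 1) + C * af b r := by rw [h5]
      _ ≤ b ^ (r + 2) + ((r + 1) * (1 + C) + C) * af b (r + 1) := by
          have k1 : (0:ℝ) ≤ ((r:ℝ) + 1) * (af b (r+1) - b ^ (r+1)) := by
            have : (0:ℝ) ≤ (r:ℝ) := Nat.cast_nonneg r
            nlinarith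
          have k2 : (0:ℝ) ≤ C * (af b (r+1) - af b r) := by nlinarith
          have k3 : (0:ℝ) ≤ (r:ℝ) * (C * af b (r+1)) := by positivity
          linarith

end urn

section urn2
variable (p ℓ b₀ w₀ : ℕ)

/-- power moments -/
noncomputable def Pm (r n : ℕ) : ℝ :=
  ∑ b ∈ Finset.range (b₀ + n + 1), urnMass p ℓ b₀ w₀ n b * ((b : ℝ)) ^ r

lemma Pm_le_M (hb : 1 ≤ b₀) (r n : ℕ) : Pm p ℓ b₀ w₀ r n ≤ M p ℓ b₀ w₀ r n := by
  apply Finset.sum_le_sum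
  intro b _
  rcases lt_or_ge b b₀ with h | h
  · rw [urnMass_zero_of_lt p ℓ b₀ w₀ h n]; simp
  · exact mul_le_mul_of_nonneg_left (pow_le_af r b (Nat.cast_nonneg b))
      (urnMass_nonneg p ℓ b₀ w₀ hb n b)

lemma M_le_Pm (hb : 1 ≤ b₀) (r n : ℕ) {C : ℝ} (hC0 : 0 ≤ C)
    (hC : ∀ b : ℝ, 1 ≤ b → af b (r + 1) ≤ b ^ (r + 1) + C * af b r) :
    M p ℓ b₀ w₀ (r + 1) n ≤ Pm p ℓ b₀ w₀ (r + 1) n + C * M p ℓ b₀ w₀ r n := by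
  rw [Pm, M, M, Finset.mul_sum, ← Finset.sum_add_distrib]
  apply Finset.sum_le_sum
  intro b _
  rcases lt_or_ge b b₀ with h | h
  · rw [urnMass_zero_of_lt p ℓ b₀ w₀ h n]; simp
  · have hb1 : (1:ℝ) ≤ (b:ℝ) := by exact_mod_cast le_trans hb h
    have hμ := urnMass_nonneg p ℓ b₀ w₀ hb n b
    have := mul_le_mul_of_nonneg_left (hC (b:ℝ) hb1) hμ
    calc urnMass p ℓ b₀ w₀ n b * af (b:ℝ) (r + 1)
        ≤ urnMass p ℓ b₀ w₀ n b * ((b:ℝ) ^ (r + 1) + C * af (b:ℝ) r) := this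
      _ = urnMass p ℓ b₀ w₀ n b * (b:ℝ) ^ (r + 1) +
            C * (urnMass p ℓ b₀ w₀ n b * af (b:ℝ) r) := by ring

end urn2
end YP


open YP

/-- **Theorem (limit moments of the rescaled Young–Pólya urn).**
With `s₀ = b₀ + w₀`, `δ = p/(p+ℓ)` and `Bₙ* = (p^δ/(p+ℓ)) Bₙ/n^δ`, for every `r ≥ 1`,
`E[(Bₙ*)^r] → m_r = (Γ(b₀+r)Γ(s₀)/(Γ(b₀)Γ(s₀+r))) ∏_{j=0}^{ℓ-1}
Γ((s₀+r+p+j)/(p+ℓ))/Γ((s₀+p+j)/(p+ℓ))` as `n → ∞`. -/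
theorem young_polya_urn_rescaled_moments_limit
    (p ℓ b₀ w₀ : ℕ) (hp : 1 ≤ p) (hb : 1 ≤ b₀) (r : ℕ) (hr : 1 ≤ r) :
    Tendsto
      (fun n : ℕ => ∑' b : ℕ,
        urnMass p ℓ b₀ w₀ n b *
          ((p : ℝ) ^ ((p : ℝ) / ((p : ℝ) + (ℓ : ℝ))) / ((p : ℝ) + (ℓ : ℝ)) * (b : ℝ) /
              (n : ℝ) ^ ((p : ℝ) / ((p : ℝ) + (ℓ : ℝ)))) ^ r)
      atTop
      (𝓝 (Real.Gamma ((b₀ : ℝ) + (r : ℝ)) * Real.Gamma ((b₀ + w₀ : ℕ) : ℝ) /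
            (Real.Gamma (b₀ : ℝ) * Real.Gamma (((b₀ + w₀ : ℕ) : ℝ) + (r : ℝ))) *
          ∏ j ∈ Finset.range ℓ,
            Real.Gamma ((((b₀ + w₀ : ℕ) : ℝ) + (r : ℝ) + (p : ℝ) + (j : ℝ)) / ((p : ℝ) + (ℓ : ℝ))) /
              Real.Gamma ((((b₀ + w₀ : ℕ) : ℝ) + (p : ℝ) + (j : ℝ)) / ((p : ℝ) + (ℓ : ℝ))))) := by
  
  obtain ⟨r', rfl⟩ : ∃ r', r = r' + 1 := ⟨r - 1, by omega⟩
  have hcast : (p : ℝ) + (ℓ : ℝ) = ((p + ℓ : ℕ) : ℝ) := by push_cast; ring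
  simp only [hcast]
  -- abbreviations
  have hq0 : (0:ℝ) < ((p + ℓ : ℕ) : ℝ) := by exact_mod_cast (by omega : 0 < p + ℓ)
  have hp0 : (0:ℝ) < (p:ℝ) := by exact_mod_cast hp
  have hδ0 : 0 < (p : ℝ) / ((p + ℓ : ℕ) : ℝ) := by positivity
  set δ : ℝ := (p : ℝ) / ((p + ℓ : ℕ) : ℝ) with hδ
  set qr : ℝ := ((p + ℓ : ℕ) : ℝ) with hqr
  set c : ℝ := (p:ℝ) ^ δ / qr with hc
  set R : ℕ := r' + 1 with hR
  have hc0 : 0 < c := by rw [hc]; positivity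
  set x : ℝ := ((b₀ + w₀ : ℕ) : ℝ) with hx
  set Lp : ℝ := ∏ i ∈ Finset.range p,
      (Real.Gamma ((x + i) / qr) / Real.Gamma (((x + i) + (R:ℝ)) / qr)) with hLp
  -- Step A : tsum as finite power moment
  have hsum : ∀ n : ℕ, (∑' b : ℕ, urnMass p ℓ b₀ w₀ n b * (c * b / (n:ℝ) ^ δ) ^ R)
      = c ^ R / ((n:ℝ) ^ δ) ^ R * Pm p ℓ b₀ w₀ R n := by
    intro n
    have h0 : ∀ b ∉ Finset.range (b₀ + n + 1),
        urnMass p ℓ b₀ w₀ n b * (c * b / (n:ℝ) ^ δ) ^ R = 0 := by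
      intro b hb'
      have hbig : b₀ + n < b := by
        by_contra hcon
        exact hb' (Finset.mem_range.2 (by omega))
      rw [urnMass_zero_of_gt p ℓ b₀ w₀ n hbig, zero_mul]
    rw [tsum_eq_sum h0, Pm, Finset.mul_sum]
    apply Finset.sum_congr rfl
    intro b _
    rw [div_pow, mul_pow]
    ring
  -- Step B : asymptotics of scaled factorial moment
  have hQ := Q_tendsto p ℓ b₀ w₀ hp hb R
  rw [← hqr, ← hx] at hQ
  rw [show (p : ℝ) / qr = δ from rfl] at hQ
  have hX : Tendsto (fun n : ℕ => (af (b₀:ℝ) R * c ^ R) *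
      (Q p ℓ b₀ w₀ R n / (n:ℝ) ^ (δ * (R:ℝ)))) atTop
      (𝓝 ((af (b₀:ℝ) R * c ^ R) * ((∏ i ∈ Finset.range p,
        (Real.Gamma ((x + i) / qr) / Real.Gamma (((x + i) + (R:ℝ)) / qr))) *
        ((1:ℝ)/p) ^ (δ * (R:ℝ))))) := hQ.const_mul _
  rw [← hLp] at hX
  -- pointwise : X n = scaled M
  have hDn : ∀ n : ℕ, ((n:ℝ) ^ δ) ^ R = (n:ℝ) ^ (δ * (R:ℝ)) := by
    intro n
    rw [← Real.rpow_natCast ((n:ℝ) ^ δ) R, ← Real.rpow_mul (Nat.cast_nonneg n)]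
  have hXeq : ∀ n : ℕ, (af (b₀:ℝ) R * c ^ R) * (Q p ℓ b₀ w₀ R n / (n:ℝ) ^ (δ * (R:ℝ)))
      = c ^ R / ((n:ℝ) ^ δ) ^ R * M p ℓ b₀ w₀ R n := by
    intro n
    rw [M_eq p ℓ b₀ w₀ hb R n, hDn n, ← Q]
    ring
  -- Step C : the error term tends to zero
  obtain ⟨C, hC0, hC⟩ := af_le_pow_add r'
  have hQ' := Q_tendsto p ℓ b₀ w₀ hp hb r'
  rw [← hqr, ← hx, show (p : ℝ) / qr = δ from rfl] at hQ'
  have hneg : Tendsto (fun n : ℕ => (n:ℝ) ^ (-δ)) atTop (𝓝 0) :=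
    (tendsto_rpow_neg_atTop hδ0).comp tendsto_natCast_atTop_atTop
  have hg : Tendsto (fun n : ℕ => (c ^ R * C * af (b₀:ℝ) r') *
      ((Q p ℓ b₀ w₀ r' n / (n:ℝ) ^ (δ * (r':ℝ))) * (n:ℝ) ^ (-δ))) atTop (𝓝 0) := by
    have := (hQ'.mul hneg).const_mul (c ^ R * C * af (b₀:ℝ) r')
    simpa using this
  have hdiff : Tendsto (fun n : ℕ =>
      c ^ R / ((n:ℝ) ^ δ) ^ R * Pm p ℓ b₀ w₀ R n -
        c ^ R / ((n:ℝ) ^ δ) ^ R * M p ℓ b₀ w₀ R n) atTop (𝓝 0) := by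
    apply squeeze_zero_norm' _ hg
    filter_upwards [eventually_ge_atTop 1] with n hn1
    have hn0 : (0:ℝ) < (n:ℝ) := by exact_mod_cast hn1
    have h1 : Pm p ℓ b₀ w₀ R n ≤ M p ℓ b₀ w₀ R n := Pm_le_M p ℓ b₀ w₀ hb R n
    have h2 : M p ℓ b₀ w₀ R n ≤ Pm p ℓ b₀ w₀ R n + C * M p ℓ b₀ w₀ r' n :=
      M_le_Pm p ℓ b₀ w₀ hb r' n hC0 hC
    have hMr' : 0 ≤ M p ℓ b₀ w₀ r' n := by
      rw [M_eq p ℓ b₀ w₀ hb r' n]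
      have hQpos := Q_pos p ℓ b₀ w₀ hb r' n
      rw [Q] at hQpos
      have haf : 0 ≤ af (b₀:ℝ) r' := (af_pos (by exact_mod_cast hb) r').le
      positivity
    have hcoef : (0:ℝ) ≤ c ^ R / ((n:ℝ) ^ δ) ^ R := by positivity
    have hnorm : ‖c ^ R / ((n:ℝ) ^ δ) ^ R * Pm p ℓ b₀ w₀ R n -
        c ^ R / ((n:ℝ) ^ δ) ^ R * M p ℓ b₀ w₀ R n‖ =
        c ^ R / ((n:ℝ) ^ δ) ^ R * (M p ℓ b₀ w₀ R n - Pm p ℓ b₀ w₀ R n) := by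
      rw [Real.norm_eq_abs, abs_of_nonpos (by nlinarith), neg_sub, ← mul_sub]
    rw [hnorm]
    have hstep : c ^ R / ((n:ℝ) ^ δ) ^ R * (M p ℓ b₀ w₀ R n - Pm p ℓ b₀ w₀ R n) ≤
        c ^ R / ((n:ℝ) ^ δ) ^ R * (C * M p ℓ b₀ w₀ r' n) := by
      apply mul_le_mul_of_nonneg_left _ hcoef
      linarith
    apply le_trans hstep
    -- identify the bound with g n
    have hrw : c ^ R / ((n:ℝ) ^ δ) ^ R * (C * M p ℓ b₀ w₀ r' n) =
        (c ^ R * C * af (b₀:ℝ) r') *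
          ((Q p ℓ b₀ w₀ r' n / (n:ℝ) ^ (δ * (r':ℝ))) * (n:ℝ) ^ (-δ)) := by
      rw [M_eq p ℓ b₀ w₀ hb r' n, ← Q, hDn n]
      have hsplit : (n:ℝ) ^ (δ * ((R:ℕ):ℝ)) = (n:ℝ) ^ (δ * (r':ℝ)) * (n:ℝ) ^ δ := by
        rw [← Real.rpow_add hn0]
        congr 1
        rw [hR]
        push_cast
        ring
      rw [hsplit, Real.rpow_neg hn0.le]
      have hne1 : (n:ℝ) ^ (δ * (r':ℝ)) ≠ 0 := (rpow_pos_of_pos hn0 _).ne'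
      have hne2 : (n:ℝ) ^ δ ≠ 0 := (rpow_pos_of_pos hn0 _).ne'
      field_simp
    rw [hrw]
  -- Step D : combine
  have hF : Tendsto (fun n : ℕ => c ^ R / ((n:ℝ) ^ δ) ^ R * Pm p ℓ b₀ w₀ R n) atTop
      (𝓝 ((af (b₀:ℝ) R * c ^ R) * (Lp * ((1:ℝ)/p) ^ (δ * (R:ℝ))) + 0)) := by
    have hcomb := hX.add hdiff
    apply hcomb.congr
    intro n
    rw [hXeq n]
    ring
  rw [add_zero] at hF
  have hgoal : Tendsto
      (fun n : ℕ => ∑' b : ℕ, urnMass p ℓ b₀ w₀ n b * (c * b / (n:ℝ) ^ δ) ^ R) atTop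
      (𝓝 ((af (b₀:ℝ) R * c ^ R) * (Lp * ((1:ℝ)/p) ^ (δ * (R:ℝ))))) := by
    apply hF.congr
    intro n
    exact (hsum n).symm
  -- Step E : identify the limit with the Gamma expression
  convert hgoal using 2
  have hx0 : (0:ℝ) < x := by rw [hx]; exact_mod_cast (by omega : 0 < b₀ + w₀)
  have hb₀0 : (0:ℝ) < (b₀:ℝ) := by exact_mod_cast hb
  have hΓb₀ := Real.Gamma_pos_of_pos hb₀0
  have hΓx := Real.Gamma_pos_of_pos hx0
  have hafx : 0 < af x R := af_pos hx0 R
  have hafb : 0 < af (b₀:ℝ) R := af_pos hb₀0 R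
  have hqrR : (0:ℝ) < qr ^ R := by positivity
  set g : ℕ → ℝ := fun i => Real.Gamma ((x + (R:ℝ) + i) / qr) / Real.Gamma ((x + i) / qr)
    with hgdef
  have hgpos : ∀ i : ℕ, 0 < g i := by
    intro i
    apply div_pos (Real.Gamma_pos_of_pos (by positivity)) (Real.Gamma_pos_of_pos (by positivity))
  have hsplitted := gamma_prod_eq x hx0 (p + ℓ) R (by omega)
  rw [← hqr] at hsplitted
  have hsplitted' : (∏ i ∈ Finset.range p, g i) * (∏ j ∈ Finset.range ℓ, g (p + j)) =
      af x R / qr ^ R := by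
    rw [← hsplitted, ← Finset.prod_range_add g p ℓ]
  have hApos : (0:ℝ) < ∏ i ∈ Finset.range p, g i := Finset.prod_pos fun i _ => hgpos i
  have hLpA : Lp * (∏ i ∈ Finset.range p, g i) = 1 := by
    rw [hLp, ← Finset.prod_mul_distrib]
    apply Finset.prod_eq_one
    intro i _
    simp only [hgdef]
    have harg : x + (R:ℝ) + (i:ℝ) = (x + i) + (R:ℝ) := by ring
    rw [harg, div_mul_div_comm, mul_comm, div_self]
    exact (mul_pos (Real.Gamma_pos_of_pos (by positivity))
      (Real.Gamma_pos_of_pos (by positivity))).ne'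
  have hLppos : 0 < Lp := by
    rw [hLp]
    exact Finset.prod_pos fun i _ => div_pos (Real.Gamma_pos_of_pos (by positivity))
      (Real.Gamma_pos_of_pos (by positivity))
  have hB : ∏ j ∈ Finset.range ℓ, g (p + j) = (af x R / qr ^ R) * Lp := by
    have h1 : ∏ i ∈ Finset.range p, g i = Lp⁻¹ :=
      eq_inv_of_mul_eq_one_left (by rw [mul_comm]; exact hLpA)
    rw [h1] at hsplitted'
    field_simp at hsplitted' ⊢
    linarith [hsplitted']
  have htail : ∀ j ∈ Finset.range ℓ,
      Real.Gamma ((x + ((R:ℕ):ℝ) + (p:ℝ) + (j:ℝ)) / qr) /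
        Real.Gamma ((x + (p:ℝ) + (j:ℝ)) / qr) = g (p + j) := by
    intro j _
    simp only [hgdef]
    have e1 : x + (R:ℝ) + ((p + j : ℕ):ℝ) = x + ((R:ℕ):ℝ) + (p:ℝ) + (j:ℝ) := by
      push_cast; ring
    have e2 : x + ((p + j : ℕ):ℝ) = x + (p:ℝ) + (j:ℝ) := by push_cast; ring
    rw [e1, e2]
  have hGb : Real.Gamma ((b₀:ℝ) + ((R:ℕ):ℝ)) = af (b₀:ℝ) R * Real.Gamma (b₀:ℝ) :=
    Gamma_af _ hb₀0 R
  have hGs : Real.Gamma (x + ((R:ℕ):ℝ)) = af x R * Real.Gamma x := Gamma_af _ hx0 R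
  have hcrush : c ^ R * ((1:ℝ)/(p:ℝ)) ^ (δ * ((R:ℕ):ℝ)) = 1 / qr ^ R := by
    rw [hc, div_pow, ← Real.rpow_natCast ((p:ℝ) ^ δ) R, ← Real.rpow_mul hp0.le,
      one_div, Real.inv_rpow hp0.le]
    have hpd : (0:ℝ) < (p:ℝ) ^ (δ * ((R:ℕ):ℝ)) := rpow_pos_of_pos hp0 _
    field_simp
  rw [Finset.prod_congr rfl htail, hGb, hGs, hB]
  calc af (b₀:ℝ) R * Real.Gamma (b₀:ℝ) * Real.Gamma x /
        (Real.Gamma (b₀:ℝ) * (af x R * Real.Gamma x)) * ((af x R / qr ^ R) * Lp)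
      = af (b₀:ℝ) R * Lp / qr ^ R := by
        field_simp
    _ = (af (b₀:ℝ) R * c ^ R) * (Lp * ((1:ℝ)/p) ^ (δ * ((R:ℕ):ℝ))) := by
        rw [show (af (b₀:ℝ) R * c ^ R) * (Lp * ((1:ℝ)/p) ^ (δ * ((R:ℕ):ℝ)))
            = (af (b₀:ℝ) R * Lp) * (c ^ R * ((1:ℝ)/p) ^ (δ * ((R:ℕ):ℝ))) from by ring,
          hcrush]
        ring
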